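/- arXiv:0704.0926 — 7 statements merged into one kernel-verified Lean document; each statement's English description precedes it below -/
import Mathlib

section
/- Let g : [0,∞) → ℝ be continuous, C ∈ ℝ and λ > 0. If for all 0 ≤ u ≤ t, g(t) − g(u) ≤ ∫_u^t (−λ g(s) + C) ds, then for all t ≥ 0, g(t) ≤ C/λ + max(0, g(0) − C/λ) · e^{−λ t}. -/
/-- A variation of Gronwall's lemma. -/
theorem gronwall_variant (g : ℝ → ℝ) (C lam : ℝ) (hlam : 0 < lam)
    (hg : ContinuousOn g (Set.Ici 0))
    (h : ∀ u t : ℝ, 0 ≤ u → u ≤ t → g t - g u ≤ ∫ s in u..t, (-lam * g s + C)) :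
    ∀ t : ℝ, 0 ≤ t → g t ≤ C / lam + max 0 (g 0 - C / lam) * Real.exp (-lam * t) := by
  intro t ht
  set F := fun s : ℝ => -lam * g s + C with hFdef
  have hFc : ContinuousOn F (Set.Ici 0) := (continuousOn_const.mul hg).add continuousOn_const
  have hf' : ∀ x ∈ Set.Ico (0:ℝ) t, ∀ r, F x < r →
      ∃ᶠ z in nhdsWithin x (Set.Ioi x), (z - x)⁻¹ * (g z - g x) < r := by
    intro x hx r hr
    have hx0 : (0:ℝ) ≤ x := hx.1
    have hFx : ContinuousWithinAt F (Set.Ici 0) x := hFc x hx0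
    obtain ⟨r', hr1, hr2⟩ := exists_between hr
    have hev : ∀ᶠ s in nhdsWithin x (Set.Ici 0), F s < r' := hFx (Iio_mem_nhds hr1)
    rw [Filter.eventually_iff, Metric.mem_nhdsWithin_iff] at hev
    obtain ⟨δ, hδ, hδ'⟩ := hev
    have hev2 : ∀ᶠ z in nhdsWithin x (Set.Ioi x), (z - x)⁻¹ * (g z - g x) < r := by
      filter_upwards [Ioo_mem_nhdsGT_of_mem
        (Set.left_mem_Ico.2 (lt_add_of_pos_right x hδ))] with z hz
      have hzx : x < z := hz.1
      have hsub : Set.uIcc x z ⊆ Set.Ici 0 := by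
        rw [Set.uIcc_of_le hzx.le]
        exact fun s hs => le_trans hx0 hs.1
      have hint : IntervalIntegrable F MeasureTheory.volume x z :=
        (hFc.mono hsub).intervalIntegrable
      have hbound : (∫ s in x..z, F s) ≤ (z - x) * r' := by
        have : (∫ s in x..z, F s) ≤ ∫ _s in x..z, r' := by
          apply intervalIntegral.integral_mono_on hzx.le hint intervalIntegrable_const
          intro s hs
          refine le_of_lt (hδ' ⟨?_, le_trans hx0 hs.1⟩)
          rw [Metric.mem_ball, Real.dist_eq, abs_of_nonneg (by linarith [hs.1])]
          linarith [hs.2, hz.2]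
        rwa [intervalIntegral.integral_const, smul_eq_mul] at this
      have h1 : g z - g x ≤ (z - x) * r' := le_trans (h x z hx0 hzx.le) hbound
      have hzx' : (0:ℝ) < z - x := by linarith
      rw [inv_mul_lt_iff₀ hzx']
      nlinarith [mul_lt_mul_of_pos_left hr2 hzx']
    exact hev2.frequently
  have key := le_gronwallBound_of_liminf_deriv_right_le
    (f := g) (f' := F) (δ := max (g 0) (C / lam)) (K := -lam) (ε := C) (a := 0) (b := t)
    (hg.mono (Set.Icc_subset_Ici_self)) hf' (le_max_left _ _)
    (fun x _ => le_rfl) t ⟨ht, le_rfl⟩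
  rw [gronwallBound_of_K_ne_0 (by linarith : -lam ≠ 0)] at key
  have hmax : max (g 0) (C / lam) = C / lam + max 0 (g 0 - C / lam) := by
    rcases le_total (g 0) (C / lam) with h' | h'
    · rw [max_eq_right h', max_eq_left (by linarith)]; ring
    · rw [max_eq_left h', max_eq_right (by linarith)]; ring
  have hlam' : lam ≠ 0 := ne_of_gt hlam
  calc g t ≤ max (g 0) (C / lam) * Real.exp (-lam * (t - 0))
        + C / (-lam) * (Real.exp (-lam * (t - 0)) - 1) := key
    _ = C / lam + max 0 (g 0 - C / lam) * Real.exp (-lam * t) := by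
        rw [hmax, sub_zero, div_neg]
        ring
end

section
/- Let f : ℝⁿ × ℝ → ℝⁿ be C¹ in its first argument and let M : ℝ → ℝⁿˣⁿ be a C¹ family of symmetric matrices such that uniformly M(t)(∂f/∂a)(c,t) + (∂f/∂a)(c,t)ᵀM(t) + M'(t) ≤ −2λ M(t) (as quadratic forms, for all c, t). Then for all a, b ∈ ℝⁿ and t, (a−b)ᵀ M'(t) (a−b) + 2(a−b)ᵀ M(t)(f(a,t) − f(b,t)) ≤ −2λ (a−b)ᵀ M(t)(a−b). -/
open Matrix

/-- Mean value bound: if φ has derivative g everywhere and g ≤ C, then φ 1 - φ 0 ≤ C. -/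
lemma mvt_deriv_le {φ g : ℝ → ℝ} {C : ℝ}
    (hφ : ∀ s, HasDerivAt φ (g s) s) (hg : ∀ s, g s ≤ C) : φ 1 - φ 0 ≤ C := by
  have h : ∀ s, HasDerivAt (fun s => C * s - φ s) (C - g s) s := fun s => by
    exact (((hasDerivAt_id s).const_mul C).sub (hφ s)).congr_deriv (by ring)
  have mono : Monotone (fun s => C * s - φ s) := by
    apply monotone_of_deriv_nonneg
    · exact fun s => (h s).differentiableAt
    · intro s
      rw [(h s).deriv]
      linarith [hg s]
  have h01 := mono (show (0:ℝ) ≤ 1 by norm_num)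
  simp only [mul_one, mul_zero, zero_sub] at h01
  linarith

/-- Key deterministic inequality in the generalized stochastic contraction lemma. -/
theorem generalized_jacobian_contraction_bound {n : ℕ}
    (f : (Fin n → ℝ) → ℝ → (Fin n → ℝ))
    (J : (Fin n → ℝ) → ℝ → Matrix (Fin n) (Fin n) ℝ)
    (M M' : ℝ → Matrix (Fin n) (Fin n) ℝ) (lam : ℝ)
    (hMsymm : ∀ t, (M t).IsSymm)
    (hM' : ∀ t i j, HasDerivAt (fun s => M s i j) (M' t i j) t)
    (hC1 : ∀ t, ContDiff ℝ 1 (fun a => f a t))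
    (hderiv : ∀ a t, HasFDerivAt (fun x => f x t)
      (LinearMap.toContinuousLinearMap (Matrix.mulVecLin (J a t))) a)
    (hbound : ∀ c t (v : Fin n → ℝ),
      v ⬝ᵥ ((M t * J c t + (J c t)ᵀ * M t + M' t) *ᵥ v)
        ≤ -2 * lam * (v ⬝ᵥ (M t *ᵥ v))) :
    ∀ a b t,
      (a - b) ⬝ᵥ (M' t *ᵥ (a - b)) + 2 * ((a - b) ⬝ᵥ (M t *ᵥ (f a t - f b t)))
        ≤ -2 * lam * ((a - b) ⬝ᵥ (M t *ᵥ (a - b))) := by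
  intro a b t
  set v : Fin n → ℝ := a - b with hv
  -- pointwise bound from hbound, using symmetry of M
  have key : ∀ c, v ⬝ᵥ (M' t *ᵥ v) + 2 * (v ⬝ᵥ (M t *ᵥ (J c t *ᵥ v)))
      ≤ -2 * lam * (v ⬝ᵥ (M t *ᵥ v)) := by
    intro c
    have h := hbound c t v
    have expand : v ⬝ᵥ ((M t * J c t + (J c t)ᵀ * M t + M' t) *ᵥ v)
        = v ⬝ᵥ (M t *ᵥ (J c t *ᵥ v)) + v ⬝ᵥ ((J c t)ᵀ *ᵥ (M t *ᵥ v))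
          + v ⬝ᵥ (M' t *ᵥ v) := by
      simp [Matrix.add_mulVec, ← Matrix.mulVec_mulVec, dotProduct_add]
    have symm : v ⬝ᵥ ((J c t)ᵀ *ᵥ (M t *ᵥ v)) = v ⬝ᵥ (M t *ᵥ (J c t *ᵥ v)) := by
      rw [Matrix.dotProduct_mulVec v ((J c t)ᵀ), Matrix.vecMul_transpose,
        Matrix.dotProduct_mulVec (J c t *ᵥ v) (M t)]
      conv_lhs => rw [← (hMsymm t).eq, Matrix.vecMul_transpose]
      rw [dotProduct_comm]
    rw [expand, symm] at h
    linarith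
  -- linear functional L w = v ⬝ᵥ (M t *ᵥ w)
  let L : (Fin n → ℝ) →ₗ[ℝ] ℝ :=
    { toFun := fun w => v ⬝ᵥ (M t *ᵥ w)
      map_add' := fun x y => by simp [Matrix.mulVec_add, dotProduct_add]
      map_smul' := fun c x => by simp [Matrix.mulVec_smul, dotProduct_smul] }
  have hpath : ∀ s : ℝ, HasDerivAt (fun s : ℝ => b + s • v) v s := by
    intro s
    have : HasDerivAt (fun s : ℝ => s • v) ((1:ℝ) • v) s :=
      (hasDerivAt_id s).smul_const v
    simpa using this.const_add b
  have hφ : ∀ s : ℝ, HasDerivAt (fun s : ℝ => L (f (b + s • v) t))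
      (L (J (b + s • v) t *ᵥ v)) s := by
    intro s
    have h1 : HasDerivAt (fun s : ℝ => f (b + s • v) t)
        ((LinearMap.toContinuousLinearMap (Matrix.mulVecLin (J (b + s • v) t))) v) s :=
      by have := (hderiv (b + s • v) t).comp_hasDerivAt s (hpath s); exact this
    have h2 := (L.toContinuousLinearMap.hasFDerivAt).comp_hasDerivAt s h1
    have h3 : (LinearMap.toContinuousLinearMap (Matrix.mulVecLin (J (b + s • v) t))) v
        = J (b + s • v) t *ᵥ v := rfl
    rw [h3] at h2
    exact h2
  have hmvt := mvt_deriv_le (C := (-2 * lam * (v ⬝ᵥ (M t *ᵥ v)) - v ⬝ᵥ (M' t *ᵥ v)) / 2) hφ (fun s => by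
    have := key (b + s • v)
    have hLeq : L (J (b + s • v) t *ᵥ v) = v ⬝ᵥ (M t *ᵥ (J (b + s • v) t *ᵥ v)) := rfl
    rw [hLeq]
    linarith)
  have hfa : b + (1:ℝ) • v = a := by
    rw [hv]; simp
  have hfb : b + (0:ℝ) • v = b := by simp
  rw [hfa, hfb] at hmvt
  have hLsub : L (f a t) - L (f b t) = v ⬝ᵥ (M t *ᵥ (f a t - f b t)) := by
    rw [← L.map_sub]; rfl
  have hC : L (f a t) - L (f b t)
      ≤ (-2 * lam * (v ⬝ᵥ (M t *ᵥ v)) - v ⬝ᵥ (M' t *ᵥ v)) / 2 := hmvt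
  rw [hLsub] at hC
  linarith
end

section
/- Let A be a symmetric block matrix A = [[A₁, A₂₁ᵀ], [A₂₁, A₂]] where A₁ and A₂ are symmetric positive definite. If the largest singular value s of A₂₁ satisfies s² < λ_min(A₁)·λ_min(A₂), then A is positive definite. -/
open Matrix

/-- Smallest eigenvalue of a Hermitian real matrix. -/
noncomputable def lamMin {m : Type*} [Fintype m] [DecidableEq m]
    (A : Matrix m m ℝ) (hA : A.IsHermitian) : ℝ := ⨅ i, hA.eigenvalues i

/-- Largest eigenvalue of a Hermitian real matrix. -/
noncomputable def lamMax {m : Type*} [Fintype m] [DecidableEq m]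
    (A : Matrix m m ℝ) (hA : A.IsHermitian) : ℝ := ⨆ i, hA.eigenvalues i

private lemma posSemidef_sub_smul_one {m : Type*} [Fintype m] [DecidableEq m]
    {A : Matrix m m ℝ} (hA : A.IsHermitian) {c : ℝ}
    (h : ∀ i, c ≤ hA.eigenvalues i) : (A - c • 1).PosSemidef := by
  have key : A - c • 1 =
      (hA.eigenvectorUnitary : Matrix m m ℝ) *
        diagonal (fun i => hA.eigenvalues i - c) *
        (star (hA.eigenvectorUnitary : Matrix m m ℝ)) := by
    have h1 : (hA.eigenvectorUnitary : Matrix m m ℝ) *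
        (star (hA.eigenvectorUnitary : Matrix m m ℝ)) = 1 :=
      (Matrix.mem_unitaryGroup_iff).mp hA.eigenvectorUnitary.2
    have := hA.spectral_theorem
    calc A - c • 1
        = (hA.eigenvectorUnitary : Matrix m m ℝ) * diagonal (RCLike.ofReal ∘ hA.eigenvalues) *
          (star (hA.eigenvectorUnitary : Matrix m m ℝ)) -
          (hA.eigenvectorUnitary : Matrix m m ℝ) * (c • (1 : Matrix m m ℝ)) *
          (star (hA.eigenvectorUnitary : Matrix m m ℝ)) := by
          rw [Unitary.conjStarAlgAut_apply] at this; rw [← this]; congr 1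
          rw [mul_smul_comm, mul_one, smul_mul_assoc, h1]
      _ = _ := by
          rw [← sub_mul, ← mul_sub]
          congr 2
          rw [smul_one_eq_diagonal, diagonal_sub]
          rfl
  rw [key]
  exact (posSemidef_diagonal_iff.mpr fun i => sub_nonneg.mpr (h i)).mul_mul_conjTranspose_same _

private lemma posSemidef_smul_one_sub {m : Type*} [Fintype m] [DecidableEq m]
    {A : Matrix m m ℝ} (hA : A.IsHermitian) {c : ℝ}
    (h : ∀ i, hA.eigenvalues i ≤ c) : (c • 1 - A).PosSemidef := by
  have key : c • (1 : Matrix m m ℝ) - A =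
      (hA.eigenvectorUnitary : Matrix m m ℝ) *
        diagonal (fun i => c - hA.eigenvalues i) *
        (star (hA.eigenvectorUnitary : Matrix m m ℝ)) := by
    have h1 : (hA.eigenvectorUnitary : Matrix m m ℝ) *
        (star (hA.eigenvectorUnitary : Matrix m m ℝ)) = 1 :=
      (Matrix.mem_unitaryGroup_iff).mp hA.eigenvectorUnitary.2
    have := hA.spectral_theorem
    calc c • (1 : Matrix m m ℝ) - A
        = (hA.eigenvectorUnitary : Matrix m m ℝ) * (c • (1 : Matrix m m ℝ)) *
          (star (hA.eigenvectorUnitary : Matrix m m ℝ)) -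
          (hA.eigenvectorUnitary : Matrix m m ℝ) * diagonal (RCLike.ofReal ∘ hA.eigenvalues) *
          (star (hA.eigenvectorUnitary : Matrix m m ℝ)) := by
          rw [Unitary.conjStarAlgAut_apply] at this; rw [← this]; congr 1
          rw [mul_smul_comm, mul_one, smul_mul_assoc, h1]
      _ = _ := by
          rw [← sub_mul, ← mul_sub]
          congr 2
          rw [smul_one_eq_diagonal, diagonal_sub]
          rfl
  rw [key]
  exact (posSemidef_diagonal_iff.mpr fun i => sub_nonneg.mpr (h i)).mul_mul_conjTranspose_same _

private lemma quad_lower {m : Type*} [Fintype m] [DecidableEq m]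
    {A : Matrix m m ℝ} (hA : A.IsHermitian) {c : ℝ}
    (h : ∀ i, c ≤ hA.eigenvalues i) (x : m → ℝ) :
    c * (x ⬝ᵥ x) ≤ x ⬝ᵥ (A *ᵥ x) := by
  have := (posSemidef_sub_smul_one hA h).dotProduct_mulVec_nonneg x
  simp only [star_trivial, sub_mulVec, dotProduct_sub, smul_mulVec, one_mulVec,
    dotProduct_smul, smul_eq_mul] at this
  linarith

private lemma quad_upper {m : Type*} [Fintype m] [DecidableEq m]
    {A : Matrix m m ℝ} (hA : A.IsHermitian) {c : ℝ}
    (h : ∀ i, hA.eigenvalues i ≤ c) (x : m → ℝ) :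
    x ⬝ᵥ (A *ᵥ x) ≤ c * (x ⬝ᵥ x) := by
  have := (posSemidef_smul_one_sub hA h).dotProduct_mulVec_nonneg x
  simp only [star_trivial, sub_mulVec, dotProduct_sub, smul_mulVec, one_mulVec,
    dotProduct_smul, smul_eq_mul] at this
  linarith

set_option maxHeartbeats 1600000 in
/-- A symmetric block matrix with positive definite diagonal blocks is positive
definite if the largest singular value of the off-diagonal block is small enough. -/
theorem block_posdef {n₁ n₂ : ℕ} [NeZero n₁] [NeZero n₂]
    (A₁ : Matrix (Fin n₁) (Fin n₁) ℝ) (A₂ : Matrix (Fin n₂) (Fin n₂) ℝ)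
    (A₂₁ : Matrix (Fin n₂) (Fin n₁) ℝ)
    (h₁ : A₁.PosDef) (h₂ : A₂.PosDef)
    (s : ℝ)
    (hs : s = Real.sqrt (lamMax (A₂₁ᴴ * A₂₁) (Matrix.isHermitian_conjTranspose_mul_self A₂₁)))
    (hlt : s ^ 2 < lamMin A₁ h₁.isHermitian * lamMin A₂ h₂.isHermitian) :
    (Matrix.fromBlocks A₁ A₂₁ᵀ A₂₁ A₂).PosDef := by
  set l₁ := lamMin A₁ h₁.isHermitian with hl₁
  set l₂ := lamMin A₂ h₂.isHermitian with hl₂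
  have hs0 : 0 ≤ s := hs ▸ Real.sqrt_nonneg _
  -- lamMin facts
  have hl₁le : ∀ i, l₁ ≤ h₁.isHermitian.eigenvalues i := fun i =>
    ciInf_le (Set.Finite.bddBelow (Set.finite_range _)) i
  have hl₂le : ∀ i, l₂ ≤ h₂.isHermitian.eigenvalues i := fun i =>
    ciInf_le (Set.Finite.bddBelow (Set.finite_range _)) i
  have hl₁pos : 0 < l₁ := by
    obtain ⟨i, hi⟩ := exists_eq_ciInf_of_finite (f := h₁.isHermitian.eigenvalues)
    rw [hl₁, lamMin, ← hi]; exact h₁.eigenvalues_pos i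
  have hl₂pos : 0 < l₂ := by
    obtain ⟨i, hi⟩ := exists_eq_ciInf_of_finite (f := h₂.isHermitian.eigenvalues)
    rw [hl₂, lamMin, ← hi]; exact h₂.eigenvalues_pos i
  -- lamMax / s facts
  have hB := Matrix.isHermitian_conjTranspose_mul_self A₂₁
  have hMaxle : ∀ i, hB.eigenvalues i ≤ s ^ 2 := by
    intro i
    have h0 : 0 ≤ lamMax (A₂₁ᴴ * A₂₁) hB := by
      have := Matrix.eigenvalues_conjTranspose_mul_self_nonneg A₂₁ i
      exact le_trans this (le_ciSup (Set.Finite.bddAbove (Set.finite_range _)) i)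
    have : s ^ 2 = lamMax (A₂₁ᴴ * A₂₁) hB := by
      rw [hs, sq, Real.mul_self_sqrt h0]
    rw [this]
    exact le_ciSup (Set.Finite.bddAbove (Set.finite_range _)) i
  -- Hermitian of block
  have hHerm : (Matrix.fromBlocks A₁ A₂₁ᵀ A₂₁ A₂).IsHermitian := by
    rw [Matrix.IsHermitian, Matrix.conjTranspose_eq_transpose_of_trivial,
      Matrix.fromBlocks_transpose, Matrix.transpose_transpose,
      ← Matrix.conjTranspose_eq_transpose_of_trivial A₁, h₁.isHermitian.eq,
      ← Matrix.conjTranspose_eq_transpose_of_trivial A₂, h₂.isHermitian.eq]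
  refine Matrix.PosDef.of_dotProduct_mulVec_pos hHerm fun x hx => ?_
  set u : Fin n₁ → ℝ := x ∘ Sum.inl with hu
  set v : Fin n₂ → ℝ := x ∘ Sum.inr with hv
  have hxe : x = Sum.elim u v := by funext i; cases i <;> rfl
  rw [star_trivial, hxe, Matrix.fromBlocks_mulVec, sumElim_dotProduct_sumElim]
  simp only [dotProduct_add]
  -- cross term equality
  have hcross : u ⬝ᵥ (A₂₁ᵀ *ᵥ v) = v ⬝ᵥ (A₂₁ *ᵥ u) := by
    rw [dotProduct_mulVec, vecMul_transpose, dotProduct_comm]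
  -- norms
  set a := Real.sqrt (u ⬝ᵥ u) with ha
  set b := Real.sqrt (v ⬝ᵥ v) with hb
  have hun : 0 ≤ u ⬝ᵥ u := Finset.sum_nonneg fun i _ => mul_self_nonneg _
  have hvn : 0 ≤ v ⬝ᵥ v := Finset.sum_nonneg fun i _ => mul_self_nonneg _
  have hua : u ⬝ᵥ u = a ^ 2 := by rw [ha, sq, Real.mul_self_sqrt hun]
  have hvb : v ⬝ᵥ v = b ^ 2 := by rw [hb, sq, Real.mul_self_sqrt hvn]
  have ha0 : 0 ≤ a := Real.sqrt_nonneg _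
  have hb0 : 0 ≤ b := Real.sqrt_nonneg _
  -- diagonal bounds
  have hq1 : l₁ * a ^ 2 ≤ u ⬝ᵥ (A₁ *ᵥ u) := by
    have := quad_lower h₁.isHermitian hl₁le u; rwa [hua] at this
  have hq2 : l₂ * b ^ 2 ≤ v ⬝ᵥ (A₂ *ᵥ v) := by
    have := quad_lower h₂.isHermitian hl₂le v; rwa [hvb] at this
  -- cross bound : (v ⬝ᵥ (A₂₁ *ᵥ u))^2 ≤ s^2 * a^2 * b^2
  have hAu : (A₂₁ *ᵥ u) ⬝ᵥ (A₂₁ *ᵥ u) ≤ s ^ 2 * a ^ 2 := by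
    have h1 : u ⬝ᵥ ((A₂₁ᴴ * A₂₁) *ᵥ u) ≤ s ^ 2 * (u ⬝ᵥ u) := quad_upper hB hMaxle u
    have h2 : u ⬝ᵥ ((A₂₁ᴴ * A₂₁) *ᵥ u) = (A₂₁ *ᵥ u) ⬝ᵥ (A₂₁ *ᵥ u) := by
      have : A₂₁ᴴ = A₂₁ᵀ := Matrix.conjTranspose_eq_transpose_of_trivial A₂₁
      rw [this, ← Matrix.mulVec_mulVec, dotProduct_mulVec, vecMul_transpose]
    rw [← h2, ← hua]; exact h1
  have hcs : (v ⬝ᵥ (A₂₁ *ᵥ u)) ^ 2 ≤ (v ⬝ᵥ v) * ((A₂₁ *ᵥ u) ⬝ᵥ (A₂₁ *ᵥ u)) := by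
    simpa [dotProduct, sq] using
      Finset.sum_mul_sq_le_sq_mul_sq Finset.univ v (A₂₁ *ᵥ u)
  have hcrossbd : -(s * a * b) ≤ v ⬝ᵥ (A₂₁ *ᵥ u) := by
    have h3 : (v ⬝ᵥ (A₂₁ *ᵥ u)) ^ 2 ≤ (s * a * b) ^ 2 := by
      calc (v ⬝ᵥ (A₂₁ *ᵥ u)) ^ 2 ≤ (v ⬝ᵥ v) * ((A₂₁ *ᵥ u) ⬝ᵥ (A₂₁ *ᵥ u)) := hcs
        _ ≤ b ^ 2 * (s ^ 2 * a ^ 2) := by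
            rw [hvb]
            exact mul_le_mul_of_nonneg_left hAu (sq_nonneg _)
        _ = (s * a * b) ^ 2 := by ring
    exact (abs_le_of_sq_le_sq' h3 (by positivity)).1
  -- nonzero
  have habpos : 0 < a ^ 2 + b ^ 2 := by
    rcases eq_or_ne u 0 with hu0 | hu0
    · have hv0 : v ≠ 0 := by
        intro hv0; apply hx; rw [hxe, hu0, hv0]; funext i; cases i <;> rfl
      have : v ⬝ᵥ v ≠ 0 := fun h => hv0 (dotProduct_self_eq_zero.mp h)
      have hbpos : 0 < b ^ 2 := lt_of_le_of_ne (sq_nonneg _) (by rw [← hvb]; exact Ne.symm this)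
      nlinarith [sq_nonneg a]
    · have : u ⬝ᵥ u ≠ 0 := fun h => hu0 (dotProduct_self_eq_zero.mp h)
      have hapos : 0 < a ^ 2 := lt_of_le_of_ne (sq_nonneg _) (by rw [← hua]; exact Ne.symm this)
      nlinarith [sq_nonneg b]
  -- final arithmetic
  have hfinal : 0 < l₁ * a ^ 2 + l₂ * b ^ 2 - 2 * (s * a * b) := by
    rcases eq_or_lt_of_le (mul_nonneg ha0 hb0) with hab | hab
    · have hsab : s * a * b = 0 := by rw [mul_assoc, ← hab, mul_zero]
      have hpos : 0 < l₁ * a ^ 2 + l₂ * b ^ 2 := by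
        rcases lt_or_eq_of_le (sq_nonneg a) with ha2 | ha2
        · have h6 := mul_pos hl₁pos ha2
          have h7 := mul_nonneg hl₂pos.le (sq_nonneg b)
          linarith
        · have hb2 : 0 < b ^ 2 := by linarith
          have h6 := mul_pos hl₂pos hb2
          have h7 := mul_nonneg hl₁pos.le (sq_nonneg a)
          linarith
      linarith
    · set p := Real.sqrt l₁ with hp
      set q := Real.sqrt l₂ with hq
      have hp2 : p ^ 2 = l₁ := Real.sq_sqrt hl₁pos.le
      have hq2 : q ^ 2 = l₂ := Real.sq_sqrt hl₂pos.le
      have hsl : s < p * q := by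
        have h4 : p * q = Real.sqrt (l₁ * l₂) := (Real.sqrt_mul hl₁pos.le _).symm
        have h5 : s = Real.sqrt (s ^ 2) := (Real.sqrt_sq hs0).symm
        rw [h4, h5]
        exact Real.sqrt_lt_sqrt (sq_nonneg _) hlt
      have h2ab : 2 * (s * a * b) < 2 * (p * q * (a * b)) := by
        have := mul_lt_mul_of_pos_right hsl hab
        nlinarith
      have hAM : 2 * (p * q * (a * b)) ≤ l₁ * a ^ 2 + l₂ * b ^ 2 := by
        rw [← hp2, ← hq2]
        nlinarith [sq_nonneg (p * a - q * b)]
      linarith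
  calc (0:ℝ) < l₁ * a ^ 2 + l₂ * b ^ 2 - 2 * (s * a * b) := hfinal
    _ ≤ u ⬝ᵥ (A₁ *ᵥ u) + u ⬝ᵥ (A₂₁ᵀ *ᵥ v) + (v ⬝ᵥ (A₂₁ *ᵥ u) + v ⬝ᵥ (A₂ *ᵥ v)) := by
        rw [hcross]; linarith
end

section
/- Let A = [[A₁, A₂₁ᵀ], [A₂₁, A₂]] be a symmetric block matrix with A₁, A₂ symmetric positive definite, and let s be the largest singular value of A₂₁ with s² < λ_min(A₁)·λ_min(A₂). Then λ_min(A) ≥ (λ_min(A₁)+λ_min(A₂))/2 − sqrt( ((λ_min(A₁)−λ_min(A₂))/2)² + s² ). -/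
open Matrix

lemma quad_decomp {n : Type*} [Fintype n] [DecidableEq n] (A : Matrix n n ℝ) (hA : A.IsHermitian)
    (x : n → ℝ) :
    x ⬝ᵥ A *ᵥ x = ∑ i, hA.eigenvalues i * ((star (hA.eigenvectorUnitary : Matrix n n ℝ) *ᵥ x) i)^2 ∧
    x ⬝ᵥ x = ∑ i, ((star (hA.eigenvectorUnitary : Matrix n n ℝ) *ᵥ x) i)^2 := by
  set V : Matrix n n ℝ := (hA.eigenvectorUnitary : Matrix n n ℝ) with hV
  set y := star V *ᵥ x with hy
  have hstar : star V = Vᵀ := by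
    rw [Matrix.star_eq_conjTranspose, Matrix.conjTranspose_eq_transpose_of_trivial]
  have hxV : x ᵥ* V = y := by
    rw [hy, hstar, ← Matrix.vecMul_transpose, Matrix.transpose_transpose]
  have hunit : V * star V = 1 := (Matrix.mem_unitaryGroup_iff).mp hA.eigenvectorUnitary.2
  constructor
  · conv_lhs => rw [hA.spectral_theorem, Unitary.conjStarAlgAut_apply]
    rw [← hV, ← Matrix.mulVec_mulVec, ← Matrix.mulVec_mulVec, Matrix.dotProduct_mulVec, hxV, ← hy]
    simp [dotProduct, Matrix.mulVec_diagonal, sq, mul_comm, mul_assoc, mul_left_comm]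
  · have h2 : y ⬝ᵥ y = x ⬝ᵥ x := by
      rw [hy, Matrix.dotProduct_mulVec, hstar, Matrix.vecMul_transpose, Matrix.mulVec_mulVec,
        ← hstar, hunit, Matrix.one_mulVec]
    rw [← h2]
    simp [dotProduct, sq]

lemma rayleigh_lower {n : Type*} [Fintype n] [DecidableEq n] [Nonempty n]
    (A : Matrix n n ℝ) (hA : A.IsHermitian) (x : n → ℝ) :
    (⨅ i, hA.eigenvalues i) * (x ⬝ᵥ x) ≤ x ⬝ᵥ A *ᵥ x := by
  obtain ⟨h1, h2⟩ := quad_decomp A hA x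
  rw [h1, h2, Finset.mul_sum]
  refine Finset.sum_le_sum fun i _ => ?_
  exact mul_le_mul_of_nonneg_right (ciInf_le (Finite.bddBelow_range _) i) (sq_nonneg _)

lemma rayleigh_upper {n : Type*} [Fintype n] [DecidableEq n] [Nonempty n]
    (A : Matrix n n ℝ) (hA : A.IsHermitian) (x : n → ℝ) :
    x ⬝ᵥ A *ᵥ x ≤ (⨆ i, hA.eigenvalues i) * (x ⬝ᵥ x) := by
  obtain ⟨h1, h2⟩ := quad_decomp A hA x
  rw [h1, h2, Finset.mul_sum]
  refine Finset.sum_le_sum fun i _ => ?_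
  exact mul_le_mul_of_nonneg_right (le_ciSup (Finite.bddAbove_range _) i) (sq_nonneg _)

lemma le_lamMin {n : Type*} [Fintype n] [DecidableEq n] [Nonempty n]
    (A : Matrix n n ℝ) (hA : A.IsHermitian) (μ : ℝ)
    (h : ∀ x : n → ℝ, μ * (x ⬝ᵥ x) ≤ x ⬝ᵥ A *ᵥ x) :
    μ ≤ ⨅ i, hA.eigenvalues i := by
  refine le_ciInf fun i => ?_
  set v : n → ℝ := ⇑(hA.eigenvectorBasis i) with hv
  have hAv : A *ᵥ v = hA.eigenvalues i • v := hA.mulVec_eigenvectorBasis i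
  have hv0 : v ≠ 0 := by
    intro h0
    exact hA.eigenvectorBasis.orthonormal.ne_zero i (by ext j; exact congrFun h0 j)
  have hpos : 0 < v ⬝ᵥ v := by
    have hnn : 0 ≤ v ⬝ᵥ v := Finset.sum_nonneg fun j _ => mul_self_nonneg _
    rcases lt_or_eq_of_le hnn with h' | h'
    · exact h'
    · exact absurd (dotProduct_self_eq_zero.mp h'.symm) hv0
  have := h v
  rw [hAv] at this
  have h2 : v ⬝ᵥ (hA.eigenvalues i • v) = hA.eigenvalues i * (v ⬝ᵥ v) := by
    simp [dotProduct_smul]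
  rw [h2] at this
  exact le_of_mul_le_mul_right (by linarith) hpos

lemma key_scalar (α β s a b : ℝ) (hs : 0 ≤ s) :
    ((α+β)/2 - Real.sqrt (((α-β)/2)^2 + s^2)) * (a^2+b^2) ≤ α*a^2 + β*b^2 - 2*s*a*b := by
  set d := Real.sqrt (((α-β)/2)^2 + s^2) with hd
  have hd0 : 0 ≤ d := Real.sqrt_nonneg _
  have hd2 : d^2 = ((α-β)/2)^2 + s^2 := Real.sq_sqrt (by positivity)
  have hdge : |(α-β)/2| ≤ d := by
    rw [← Real.sqrt_sq_eq_abs]; exact Real.sqrt_le_sqrt (by nlinarith [sq_nonneg s])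
  obtain ⟨hl, hr⟩ := abs_le.mp hdge
  have hp : (0:ℝ) ≤ (α-β)/2 + d := by linarith
  have hq : (0:ℝ) ≤ d - (α-β)/2 := by linarith
  have hpq : ((α-β)/2 + d) * (d - (α-β)/2) = s^2 := by nlinarith
  have hss : Real.sqrt ((α-β)/2 + d) * Real.sqrt (d - (α-β)/2) = s := by
    rw [← Real.sqrt_mul hp, hpq, Real.sqrt_sq hs]
  set P := Real.sqrt ((α-β)/2 + d) with hP
  set Q := Real.sqrt (d - (α-β)/2) with hQ
  have e1 : P^2 = (α-β)/2 + d := Real.sq_sqrt hp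
  have e2 : Q^2 = d - (α-β)/2 := Real.sq_sqrt hq
  have h0 : 0 ≤ ((α-β)/2 + d)*a^2 - 2*(s*(a*b)) + (d - (α-β)/2)*b^2 := by
    calc (0:ℝ) ≤ (P*a - Q*b)^2 := sq_nonneg _
    _ = P^2*a^2 - 2*((P*Q)*(a*b)) + Q^2*b^2 := by ring
    _ = ((α-β)/2 + d)*a^2 - 2*(s*(a*b)) + (d - (α-β)/2)*b^2 := by rw [e1, e2, hss]
  nlinarith [h0]


/-- Lower bound on the smallest eigenvalue of a symmetric block matrix. -/
theorem block_lamMin_bound {n₁ n₂ : ℕ} [NeZero n₁] [NeZero n₂]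
    (A₁ : Matrix (Fin n₁) (Fin n₁) ℝ) (A₂ : Matrix (Fin n₂) (Fin n₂) ℝ)
    (A₂₁ : Matrix (Fin n₂) (Fin n₁) ℝ)
    (h₁ : A₁.PosDef) (h₂ : A₂.PosDef)
    (s : ℝ)
    (hs : s = Real.sqrt (lamMax (A₂₁ᴴ * A₂₁) (Matrix.isHermitian_conjTranspose_mul_self A₂₁)))
    (hlt : s ^ 2 < lamMin A₁ h₁.isHermitian * lamMin A₂ h₂.isHermitian)
    (hA : (Matrix.fromBlocks A₁ A₂₁ᵀ A₂₁ A₂).IsHermitian) :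
    lamMin _ hA ≥
      (lamMin A₁ h₁.isHermitian + lamMin A₂ h₂.isHermitian) / 2 -
        Real.sqrt (((lamMin A₁ h₁.isHermitian - lamMin A₂ h₂.isHermitian) / 2) ^ 2 + s ^ 2) := by
  have : Nonempty (Fin n₁) := ⟨⟨0, Nat.pos_of_ne_zero (NeZero.ne n₁)⟩⟩
  have : Nonempty (Fin n₂) := ⟨⟨0, Nat.pos_of_ne_zero (NeZero.ne n₂)⟩⟩
  set α := lamMin A₁ h₁.isHermitian with hα
  set β := lamMin A₂ h₂.isHermitian with hβ
  set μ := (α + β) / 2 - Real.sqrt (((α - β) / 2) ^ 2 + s ^ 2) with hμ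
  have hs0 : 0 ≤ s := hs ▸ Real.sqrt_nonneg _
  -- s^2 bounds the quadratic form of A₂₁ᴴ * A₂₁
  have hM : (A₂₁ᴴ * A₂₁).IsHermitian := Matrix.isHermitian_conjTranspose_mul_self A₂₁
  have hmaxnn : 0 ≤ lamMax (A₂₁ᴴ * A₂₁) hM := by
    obtain ⟨i⟩ := (inferInstance : Nonempty (Fin n₁))
    exact le_trans ((Matrix.posSemidef_conjTranspose_mul_self A₂₁).eigenvalues_nonneg i)
      (le_ciSup (Finite.bddAbove_range _) i)
  have hs2 : s ^ 2 = lamMax (A₂₁ᴴ * A₂₁) hM := by rw [hs]; exact Real.sq_sqrt hmaxnn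
  have hop : ∀ x : Fin n₁ → ℝ, (A₂₁ *ᵥ x) ⬝ᵥ (A₂₁ *ᵥ x) ≤ s ^ 2 * (x ⬝ᵥ x) := by
    intro x
    have he : x ⬝ᵥ (A₂₁ᴴ * A₂₁) *ᵥ x = (A₂₁ *ᵥ x) ⬝ᵥ (A₂₁ *ᵥ x) := by
      rw [← Matrix.mulVec_mulVec, Matrix.dotProduct_mulVec,
        Matrix.conjTranspose_eq_transpose_of_trivial, Matrix.vecMul_transpose]
    rw [← he, hs2]
    exact rayleigh_upper _ hM x
  rw [ge_iff_le]
  show μ ≤ ⨅ i, hA.eigenvalues i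
  apply le_lamMin
  intro x
  set x₁ : Fin n₁ → ℝ := x ∘ Sum.inl with hx₁
  set x₂ : Fin n₂ → ℝ := x ∘ Sum.inr with hx₂
  set a := Real.sqrt (x₁ ⬝ᵥ x₁) with ha
  set b := Real.sqrt (x₂ ⬝ᵥ x₂) with hb
  have hx1nn : 0 ≤ x₁ ⬝ᵥ x₁ := Finset.sum_nonneg fun j _ => mul_self_nonneg _
  have hx2nn : 0 ≤ x₂ ⬝ᵥ x₂ := Finset.sum_nonneg fun j _ => mul_self_nonneg _
  have ha2 : a ^ 2 = x₁ ⬝ᵥ x₁ := Real.sq_sqrt hx1nn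
  have hb2 : b ^ 2 = x₂ ⬝ᵥ x₂ := Real.sq_sqrt hx2nn
  have ha0 : 0 ≤ a := Real.sqrt_nonneg _
  have hb0 : 0 ≤ b := Real.sqrt_nonneg _
  -- expand the block quadratic form
  have hxe : x = Sum.elim x₁ x₂ := (Sum.elim_comp_inl_inr x).symm
  have hdx : x ⬝ᵥ x = x₁ ⬝ᵥ x₁ + x₂ ⬝ᵥ x₂ := by
    conv_lhs => rw [hxe]
    exact sumElim_dotProduct_sumElim _ _ _ _
  have hcross1 : x₁ ⬝ᵥ (A₂₁ᵀ *ᵥ x₂) = (A₂₁ *ᵥ x₁) ⬝ᵥ x₂ := by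
    rw [Matrix.dotProduct_mulVec, Matrix.vecMul_transpose]
  have hform : x ⬝ᵥ (Matrix.fromBlocks A₁ A₂₁ᵀ A₂₁ A₂) *ᵥ x =
      x₁ ⬝ᵥ A₁ *ᵥ x₁ + x₂ ⬝ᵥ A₂ *ᵥ x₂ + 2 * ((A₂₁ *ᵥ x₁) ⬝ᵥ x₂) := by
    conv_lhs => rw [hxe, Matrix.fromBlocks_mulVec]
    rw [sumElim_dotProduct_sumElim]
    rw [show (Sum.elim x₁ x₂ ∘ Sum.inl) = x₁ from rfl,
      show (Sum.elim x₁ x₂ ∘ Sum.inr) = x₂ from rfl,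
      dotProduct_add, dotProduct_add, hcross1,
      dotProduct_comm x₂ (A₂₁ *ᵥ x₁)]
    ring
  -- Bound the cross term
  have hCS : ((A₂₁ *ᵥ x₁) ⬝ᵥ x₂) ^ 2 ≤ (s * a * b) ^ 2 := by
    have h1 : ((A₂₁ *ᵥ x₁) ⬝ᵥ x₂) ^ 2 ≤ ((A₂₁ *ᵥ x₁) ⬝ᵥ (A₂₁ *ᵥ x₁)) * (x₂ ⬝ᵥ x₂) := by
      have := Finset.sum_mul_sq_le_sq_mul_sq Finset.univ (A₂₁ *ᵥ x₁) x₂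
      simpa [dotProduct, sq] using this
    calc ((A₂₁ *ᵥ x₁) ⬝ᵥ x₂) ^ 2 ≤ ((A₂₁ *ᵥ x₁) ⬝ᵥ (A₂₁ *ᵥ x₁)) * (x₂ ⬝ᵥ x₂) := h1
    _ ≤ (s ^ 2 * (x₁ ⬝ᵥ x₁)) * (x₂ ⬝ᵥ x₂) :=
        mul_le_mul_of_nonneg_right (hop x₁) hx2nn
    _ = (s * a * b) ^ 2 := by rw [← ha2, ← hb2]; ring
  have hcross : -(s * a * b) ≤ (A₂₁ *ᵥ x₁) ⬝ᵥ x₂ := by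
    have habs : |(A₂₁ *ᵥ x₁) ⬝ᵥ x₂| ≤ s * a * b := by
      have h2 := Real.sqrt_le_sqrt hCS
      rw [Real.sqrt_sq_eq_abs, Real.sqrt_sq_eq_abs] at h2
      exact h2.trans_eq (abs_of_nonneg (by positivity))
    linarith [neg_abs_le ((A₂₁ *ᵥ x₁) ⬝ᵥ x₂), habs]
  -- Rayleigh bounds for the diagonal blocks
  have hq1 : α * (x₁ ⬝ᵥ x₁) ≤ x₁ ⬝ᵥ A₁ *ᵥ x₁ := rayleigh_lower _ _ x₁
  have hq2 : β * (x₂ ⬝ᵥ x₂) ≤ x₂ ⬝ᵥ A₂ *ᵥ x₂ := rayleigh_lower _ _ x₂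
  have hkey := key_scalar α β s a b hs0
  rw [← ha2] at hq1
  rw [← hb2] at hq2
  rw [hform, hdx, ← ha2, ← hb2, hμ]
  linarith [hkey, hq1, hq2, hcross]
end

section
/- Let J be the 2×2 real matrix [[−α, 1], [−α², 0]] for α > 0, and let M_α = (1/2)·[[α², −α/2], [−α/2, 1]]. Then M_α is positive definite, and M_α J + Jᵀ M_α ≤ −α M_α (as quadratic forms), i.e. the system ẋ = Jx is contracting with rate α/2 in the metric M_α. -/
open Matrix

/-- The composite-variable observer system is contracting with rate α/2 in the
metric M_α. -/
theorem composite_observer_contracting (α : ℝ) (hα : 0 < α) :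
    ((1 / 2 : ℝ) • !![α ^ 2, -α / 2; -α / 2, 1] : Matrix (Fin 2) (Fin 2) ℝ).PosDef ∧
    ∀ v : Fin 2 → ℝ,
      v ⬝ᵥ ((((1 / 2 : ℝ) • !![α ^ 2, -α / 2; -α / 2, 1]) * !![-α, 1; -α ^ 2, 0] +
              (!![-α, 1; -α ^ 2, 0] : Matrix (Fin 2) (Fin 2) ℝ)ᵀ *
                ((1 / 2 : ℝ) • !![α ^ 2, -α / 2; -α / 2, 1])) *ᵥ v)
        ≤ -α * (v ⬝ᵥ (((1 / 2 : ℝ) • !![α ^ 2, -α / 2; -α / 2, 1]) *ᵥ v)) := by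
  constructor
  · rw [posDef_iff_dotProduct_mulVec]
    constructor
    · ext i j
      fin_cases i <;> fin_cases j <;>
        simp [Matrix.conjTranspose, Matrix.IsHermitian, vecHead, vecTail]
    · intro x hx
      have h0 : x 0 ≠ 0 ∨ x 1 ≠ 0 := by
        by_contra h
        push_neg at h
        exact hx (funext fun i => by fin_cases i <;> simp [h.1, h.2])
      simp [dotProduct, mulVec, Fin.sum_univ_two, vecHead, vecTail]
      rcases h0 with h | h
      · nlinarith [mul_pos (mul_pos hα hα) (mul_self_pos.mpr h),
          sq_nonneg (α * x 0 - x 1), sq_nonneg (x 1)]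
      · nlinarith [mul_self_pos.mpr h, sq_nonneg (α * x 0 - x 1), sq_nonneg (x 0),
          mul_pos hα hα]
  · intro v
    apply le_of_eq
    simp [dotProduct, mulVec, Matrix.mul_apply, Fin.sum_univ_two, vecHead, vecTail]
    ring
end

section
/- Let M₁ = Θ₁ᵀΘ₁ and M₂ = Θ₂ᵀΘ₂ be metrics (Θᵢ invertible), and suppose (Θ₁J₁Θ₁⁻¹)_s ≤ −λ₁ I and (Θ₂J₂Θ₂⁻¹)_s ≤ −λ₂ I. Suppose the coupling Jacobians satisfy Θ₁J₁₂Θ₂⁻¹ = −k·(Θ₂J₂₁Θ₁⁻¹)ᵀ for some k > 0. Let J = [[J₁, J₁₂],[J₂₁, J₂]] and Θ = diag(Θ₁, √k·Θ₂). Then (ΘJΘ⁻¹)_s = diag((Θ₁J₁Θ₁⁻¹)_s, (Θ₂J₂Θ₂⁻¹)_s) ≤ −min(λ₁, λ₂)·I. -/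
open Matrix

/-- Symmetric part of a square matrix. -/
noncomputable def symPart {m : Type*} [Fintype m] (A : Matrix m m ℝ) : Matrix m m ℝ :=
  (1 / 2 : ℝ) • (A + Aᵀ)

/-- Negative feedback combination: the generalized Jacobian of the combined system
is block diagonal in the combined metric and contracting with rate min(λ₁, λ₂). -/
theorem negative_feedback_combination {n₁ n₂ : ℕ}
    (Θ₁ J₁ : Matrix (Fin n₁) (Fin n₁) ℝ) (Θ₂ J₂ : Matrix (Fin n₂) (Fin n₂) ℝ)
    (J₁₂ : Matrix (Fin n₁) (Fin n₂) ℝ) (J₂₁ : Matrix (Fin n₂) (Fin n₁) ℝ)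
    (lam₁ lam₂ k : ℝ) (hk : 0 < k)
    (hΘ₁ : IsUnit Θ₁.det) (hΘ₂ : IsUnit Θ₂.det)
    (h₁ : ∀ v : Fin n₁ → ℝ, v ⬝ᵥ (symPart (Θ₁ * J₁ * Θ₁⁻¹) *ᵥ v) ≤ -lam₁ * (v ⬝ᵥ v))
    (h₂ : ∀ v : Fin n₂ → ℝ, v ⬝ᵥ (symPart (Θ₂ * J₂ * Θ₂⁻¹) *ᵥ v) ≤ -lam₂ * (v ⬝ᵥ v))
    (hfb : Θ₁ * J₁₂ * Θ₂⁻¹ = (-k) • (Θ₂ * J₂₁ * Θ₁⁻¹)ᵀ) :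
    symPart
        (Matrix.fromBlocks Θ₁ 0 0 (Real.sqrt k • Θ₂) *
          Matrix.fromBlocks J₁ J₁₂ J₂₁ J₂ *
            (Matrix.fromBlocks Θ₁ 0 0 (Real.sqrt k • Θ₂))⁻¹)
      = Matrix.fromBlocks (symPart (Θ₁ * J₁ * Θ₁⁻¹)) 0 0 (symPart (Θ₂ * J₂ * Θ₂⁻¹)) ∧
    ∀ v : Fin n₁ ⊕ Fin n₂ → ℝ,
      v ⬝ᵥ (symPart
          (Matrix.fromBlocks Θ₁ 0 0 (Real.sqrt k • Θ₂) *
            Matrix.fromBlocks J₁ J₁₂ J₂₁ J₂ *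
              (Matrix.fromBlocks Θ₁ 0 0 (Real.sqrt k • Θ₂))⁻¹) *ᵥ v)
        ≤ -min lam₁ lam₂ * (v ⬝ᵥ v) := by
  have hs : (0:ℝ) < Real.sqrt k := Real.sqrt_pos.mpr hk
  have hsne : Real.sqrt k ≠ 0 := ne_of_gt hs
  have hkk : Real.sqrt k * Real.sqrt k = k := Real.mul_self_sqrt hk.le
  -- inverse of the block-diagonal matrix
  have hinv : (Matrix.fromBlocks Θ₁ 0 0 (Real.sqrt k • Θ₂))⁻¹
      = Matrix.fromBlocks Θ₁⁻¹ 0 0 ((Real.sqrt k)⁻¹ • Θ₂⁻¹) := by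
    apply Matrix.inv_eq_right_inv
    rw [Matrix.fromBlocks_multiply]
    simp [Matrix.mul_nonsing_inv _ hΘ₁, Matrix.smul_mul, Matrix.mul_smul,
      Matrix.mul_nonsing_inv _ hΘ₂, smul_smul, hsne, Matrix.fromBlocks_one]
  set C := Θ₂ * J₂₁ * Θ₁⁻¹ with hC
  have hprod : (Matrix.fromBlocks Θ₁ 0 0 (Real.sqrt k • Θ₂) *
          Matrix.fromBlocks J₁ J₁₂ J₂₁ J₂ *
            (Matrix.fromBlocks Θ₁ 0 0 (Real.sqrt k • Θ₂))⁻¹)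
      = Matrix.fromBlocks (Θ₁ * J₁ * Θ₁⁻¹) ((-(Real.sqrt k)) • Cᵀ)
          (Real.sqrt k • C) (Θ₂ * J₂ * Θ₂⁻¹) := by
    rw [hinv, Matrix.fromBlocks_multiply, Matrix.fromBlocks_multiply, Matrix.fromBlocks_inj]
    refine ⟨by simp, ?_, by simp [Matrix.smul_mul, hC, Matrix.mul_assoc], ?_⟩
    · have hc : (Real.sqrt k)⁻¹ * (-k) = -(Real.sqrt k) := by
        rw [← hkk]; field_simp; rw [Real.sqrt_sq hs.le]
      simp only [Matrix.zero_mul, add_zero, Matrix.mul_zero, zero_add, Matrix.mul_smul, hfb, smul_smul, hc, neg_smul, smul_neg]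
      have hc2 : (Real.sqrt k)⁻¹ * k = Real.sqrt k := by rw [← hkk]; field_simp; rw [Real.sqrt_sq hs.le]
      rw [hc2]
    · simp [Matrix.smul_mul, Matrix.mul_smul, smul_smul, hsne, Matrix.mul_assoc]
  have hblock : symPart
        (Matrix.fromBlocks Θ₁ 0 0 (Real.sqrt k • Θ₂) *
          Matrix.fromBlocks J₁ J₁₂ J₂₁ J₂ *
            (Matrix.fromBlocks Θ₁ 0 0 (Real.sqrt k • Θ₂))⁻¹)
      = Matrix.fromBlocks (symPart (Θ₁ * J₁ * Θ₁⁻¹)) 0 0 (symPart (Θ₂ * J₂ * Θ₂⁻¹)) := by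
    rw [hprod]
    unfold symPart
    rw [Matrix.fromBlocks_transpose]
    rw [Matrix.fromBlocks_add, Matrix.fromBlocks_smul, Matrix.fromBlocks_inj]
    exact ⟨rfl, by simp [Matrix.transpose_smul], by simp [Matrix.transpose_smul], rfl⟩
  refine ⟨hblock, ?_⟩
  intro v
  rw [hblock]
  have hv : v = Sum.elim (v ∘ Sum.inl) (v ∘ Sum.inr) := by
    funext x; cases x <;> rfl
  rw [hv, Matrix.fromBlocks_mulVec]
  simp only [Matrix.zero_mulVec, add_zero, zero_add, sumElim_dotProduct_sumElim,
    Sum.elim_comp_inl, Sum.elim_comp_inr]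
  have e1 := h₁ (v ∘ Sum.inl)
  have e2 := h₂ (v ∘ Sum.inr)
  have p1 : (0:ℝ) ≤ (v ∘ Sum.inl) ⬝ᵥ (v ∘ Sum.inl) := Finset.sum_nonneg fun i _ => mul_self_nonneg _
  have p2 : (0:ℝ) ≤ (v ∘ Sum.inr) ⬝ᵥ (v ∘ Sum.inr) := Finset.sum_nonneg fun i _ => mul_self_nonneg _
  have m1 : -lam₁ ≤ -min lam₁ lam₂ := by simp [min_le_left]
  have m2 : -lam₂ ≤ -min lam₁ lam₂ := by simp [min_le_right]
  nlinarith [mul_le_mul_of_nonneg_right m1 p1, mul_le_mul_of_nonneg_right m2 p2]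
end

section
/- Let Θ₁, Θ₂ be invertible matrices with (Θ₁J₁Θ₁⁻¹)_s ≤ −λ₁I and (Θ₂J₂Θ₂⁻¹)_s ≤ −λ₂I, J₁₂ = 0, and the largest singular value of Θ₂J₂₁Θ₁⁻¹ squared at most K > 0. Let ε = sqrt(2λ₁λ₂/K) and Θ_ε = diag(Θ₁, εΘ₂). Then the symmetric part of Θ_ε [[J₁,0],[J₂₁,J₂]] Θ_ε⁻¹ has largest eigenvalue at most −(1/2)(λ₁ + λ₂ − sqrt(λ₁² + λ₂²)). -/
open Matrix

lemma dot_symPart {m : Type*} [Fintype m] (A : Matrix m m ℝ) (v : m → ℝ) :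
    v ⬝ᵥ (symPart A *ᵥ v) = v ⬝ᵥ (A *ᵥ v) := by
  have h : v ⬝ᵥ (Aᵀ *ᵥ v) = v ⬝ᵥ (A *ᵥ v) := by
    rw [Matrix.mulVec_transpose, dotProduct_comm, Matrix.dotProduct_mulVec]
  simp only [symPart, Matrix.smul_mulVec, Matrix.add_mulVec, dotProduct_smul,
    dotProduct_add, h, smul_eq_mul]
  ring

lemma dot_sum_elim {m n : Type*} [Fintype m] [Fintype n]
    (v : m ⊕ n → ℝ) (p : m → ℝ) (q : n → ℝ) :
    v ⬝ᵥ Sum.elim p q = (v ∘ Sum.inl) ⬝ᵥ p + (v ∘ Sum.inr) ⬝ᵥ q := by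
  simp [dotProduct, Fintype.sum_sum_type]

lemma dot_self_split {m n : Type*} [Fintype m] [Fintype n] (v : m ⊕ n → ℝ) :
    v ⬝ᵥ v = (v ∘ Sum.inl) ⬝ᵥ (v ∘ Sum.inl) + (v ∘ Sum.inr) ⬝ᵥ (v ∘ Sum.inr) := by
  simp [dotProduct, Fintype.sum_sum_type]

lemma dot_self_nonneg {m : Type*} [Fintype m] (v : m → ℝ) : 0 ≤ v ⬝ᵥ v :=
  Finset.sum_nonneg fun i _ => mul_self_nonneg (v i)

lemma cauchy_schwarz_dot {m : Type*} [Fintype m] (v w : m → ℝ) :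
    v ⬝ᵥ w ≤ Real.sqrt (v ⬝ᵥ v) * Real.sqrt (w ⬝ᵥ w) := by
  have := Real.sum_mul_le_sqrt_mul_sqrt Finset.univ v w
  simpa [dotProduct, sq] using this

lemma key_scalar_s17 (lam₁ lam₂ : ℝ) (h1 : 0 < lam₁) (h2 : 0 < lam₂)
    (a b : ℝ) (ha : 0 ≤ a) (hb : 0 ≤ b) :
    -lam₁ * a ^ 2 + Real.sqrt (2 * lam₁ * lam₂) * (a * b) - lam₂ * b ^ 2 ≤
      -(1 / 2) * (lam₁ + lam₂ - Real.sqrt (lam₁ ^ 2 + lam₂ ^ 2)) * (a ^ 2 + b ^ 2) := by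
  set r := Real.sqrt (lam₁ ^ 2 + lam₂ ^ 2) with hr
  set s := Real.sqrt (2 * lam₁ * lam₂) with hs
  have hr2 : r ^ 2 = lam₁ ^ 2 + lam₂ ^ 2 := Real.sq_sqrt (by positivity)
  have hs2 : s ^ 2 = 2 * lam₁ * lam₂ := Real.sq_sqrt (by positivity)
  have hr0 : 0 ≤ r := Real.sqrt_nonneg _
  have hs0 : 0 ≤ s := Real.sqrt_nonneg _
  have hd2 : (lam₂ - lam₁) ^ 2 < r ^ 2 := by nlinarith
  have hrgt : lam₂ - lam₁ < r := lt_of_pow_lt_pow_left₀ 2 hr0 hd2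
  nlinarith [sq_nonneg ((r - (lam₂ - lam₁)) * a - s * b), mul_nonneg ha hb,
    sq_nonneg a, sq_nonneg b, mul_pos h1 h2]

/-- Hierarchical combination property: with the scaling ε = sqrt(2λ₁λ₂/K), the
symmetric part of the generalized Jacobian of the hierarchical combination has
largest eigenvalue at most −(1/2)(λ₁ + λ₂ − sqrt(λ₁² + λ₂²)). -/
theorem hierarchical_combination {n₁ n₂ : ℕ}
    (Θ₁ J₁ : Matrix (Fin n₁) (Fin n₁) ℝ) (Θ₂ J₂ : Matrix (Fin n₂) (Fin n₂) ℝ)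
    (J₂₁ : Matrix (Fin n₂) (Fin n₁) ℝ)
    (lam₁ lam₂ K : ℝ) (hlam₁ : 0 < lam₁) (hlam₂ : 0 < lam₂) (hK : 0 < K)
    (hΘ₁ : IsUnit Θ₁.det) (hΘ₂ : IsUnit Θ₂.det)
    (h₁ : ∀ v : Fin n₁ → ℝ, v ⬝ᵥ (symPart (Θ₁ * J₁ * Θ₁⁻¹) *ᵥ v) ≤ -lam₁ * (v ⬝ᵥ v))
    (h₂ : ∀ v : Fin n₂ → ℝ, v ⬝ᵥ (symPart (Θ₂ * J₂ * Θ₂⁻¹) *ᵥ v) ≤ -lam₂ * (v ⬝ᵥ v))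
    (hsing : ∀ v : Fin n₁ → ℝ,
      ((Θ₂ * J₂₁ * Θ₁⁻¹) *ᵥ v) ⬝ᵥ ((Θ₂ * J₂₁ * Θ₁⁻¹) *ᵥ v) ≤ K * (v ⬝ᵥ v)) :
    ∀ v : Fin n₁ ⊕ Fin n₂ → ℝ,
      v ⬝ᵥ (symPart
          (Matrix.fromBlocks Θ₁ 0 0 (Real.sqrt (2 * lam₁ * lam₂ / K) • Θ₂) *
            Matrix.fromBlocks J₁ 0 J₂₁ J₂ *
              (Matrix.fromBlocks Θ₁ 0 0 (Real.sqrt (2 * lam₁ * lam₂ / K) • Θ₂))⁻¹) *ᵥ v)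
        ≤ -(1 / 2) * (lam₁ + lam₂ - Real.sqrt (lam₁ ^ 2 + lam₂ ^ 2)) * (v ⬝ᵥ v) := by
  intro v
  set ε := Real.sqrt (2 * lam₁ * lam₂ / K) with hεdef
  have hε : 0 < ε := Real.sqrt_pos.mpr (by positivity)
  have hεK : ε * Real.sqrt K = Real.sqrt (2 * lam₁ * lam₂) := by
    rw [hεdef, ← Real.sqrt_mul (by positivity), div_mul_cancel₀ _ hK.ne']
  -- the inverse of the block diagonal matrix
  have hinv : (Matrix.fromBlocks Θ₁ 0 0 (ε • Θ₂))⁻¹ =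
      Matrix.fromBlocks Θ₁⁻¹ 0 0 (ε⁻¹ • Θ₂⁻¹) := by
    apply Matrix.inv_eq_right_inv
    rw [Matrix.fromBlocks_multiply]
    simp only [Matrix.mul_nonsing_inv _ hΘ₁, Matrix.smul_mul, Matrix.mul_smul,
      Matrix.mul_nonsing_inv _ hΘ₂, smul_smul, mul_inv_cancel₀ hε.ne', inv_mul_cancel₀ hε.ne', one_smul,
      Matrix.mul_zero, Matrix.zero_mul, add_zero, zero_add, smul_zero]
    exact Matrix.fromBlocks_one
  have hM : Matrix.fromBlocks Θ₁ 0 0 (ε • Θ₂) * Matrix.fromBlocks J₁ 0 J₂₁ J₂ *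
      (Matrix.fromBlocks Θ₁ 0 0 (ε • Θ₂))⁻¹ =
      Matrix.fromBlocks (Θ₁ * J₁ * Θ₁⁻¹) 0 (ε • (Θ₂ * J₂₁ * Θ₁⁻¹)) (Θ₂ * J₂ * Θ₂⁻¹) := by
    rw [hinv, Matrix.fromBlocks_multiply, Matrix.fromBlocks_multiply]
    simp only [Matrix.smul_mul, Matrix.mul_smul, smul_smul, mul_inv_cancel₀ hε.ne', inv_mul_cancel₀ hε.ne', one_smul,
      Matrix.mul_zero, Matrix.zero_mul, add_zero, zero_add, smul_zero]
  rw [hM, dot_symPart, Matrix.fromBlocks_mulVec, dot_sum_elim]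
  set x := v ∘ Sum.inl with hx
  set y := v ∘ Sum.inr with hy
  set B := Θ₂ * J₂₁ * Θ₁⁻¹ with hB
  have hA₁ : x ⬝ᵥ ((Θ₁ * J₁ * Θ₁⁻¹) *ᵥ x) ≤ -lam₁ * (x ⬝ᵥ x) := by
    rw [← dot_symPart]; exact h₁ x
  have hA₂ : y ⬝ᵥ ((Θ₂ * J₂ * Θ₂⁻¹) *ᵥ y) ≤ -lam₂ * (y ⬝ᵥ y) := by
    rw [← dot_symPart]; exact h₂ y
  set a := Real.sqrt (x ⬝ᵥ x) with haa
  set b := Real.sqrt (y ⬝ᵥ y) with hbb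
  have ha0 : 0 ≤ a := Real.sqrt_nonneg _
  have hb0 : 0 ≤ b := Real.sqrt_nonneg _
  have ha2 : a ^ 2 = x ⬝ᵥ x := Real.sq_sqrt (dot_self_nonneg x)
  have hb2 : b ^ 2 = y ⬝ᵥ y := Real.sq_sqrt (dot_self_nonneg y)
  have hcross : y ⬝ᵥ (B *ᵥ x) ≤ Real.sqrt K * (a * b) := by
    calc y ⬝ᵥ (B *ᵥ x) ≤ b * Real.sqrt ((B *ᵥ x) ⬝ᵥ (B *ᵥ x)) := cauchy_schwarz_dot y (B *ᵥ x)
      _ ≤ b * Real.sqrt (K * (x ⬝ᵥ x)) := by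
          exact mul_le_mul_of_nonneg_left (Real.sqrt_le_sqrt (hsing x)) hb0
      _ = Real.sqrt K * (a * b) := by
          rw [Real.sqrt_mul hK.le, ← haa]; ring
  have hcross' : ε * (y ⬝ᵥ (B *ᵥ x)) ≤ Real.sqrt (2 * lam₁ * lam₂) * (a * b) := by
    calc ε * (y ⬝ᵥ (B *ᵥ x)) ≤ ε * (Real.sqrt K * (a * b)) :=
          mul_le_mul_of_nonneg_left hcross hε.le
      _ = Real.sqrt (2 * lam₁ * lam₂) * (a * b) := by rw [← hεK]; ring
  have hkey := key_scalar_s17 lam₁ lam₂ hlam₁ hlam₂ a b ha0 hb0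
  rw [dot_self_split v, ← hx, ← hy, ← ha2, ← hb2]
  simp only [Matrix.zero_mulVec, add_zero, Matrix.smul_mulVec, dotProduct_add,
    dotProduct_smul, smul_eq_mul]
  calc x ⬝ᵥ ((Θ₁ * J₁ * Θ₁⁻¹) *ᵥ x) + (ε * (y ⬝ᵥ (B *ᵥ x)) + y ⬝ᵥ ((Θ₂ * J₂ * Θ₂⁻¹) *ᵥ y))
      ≤ -lam₁ * a ^ 2 + (Real.sqrt (2 * lam₁ * lam₂) * (a * b) + -lam₂ * b ^ 2) := by
        rw [ha2, hb2]
        exact add_le_add hA₁ (add_le_add hcross' hA₂)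
    _ ≤ -(1 / 2) * (lam₁ + lam₂ - Real.sqrt (lam₁ ^ 2 + lam₂ ^ 2)) * (a ^ 2 + b ^ 2) := by
        linarith [hkey]
end
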